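/- Fix M ≥ 1 and set k = 1/(24 M²), η = k/2, λ = 1/(1−η), and h(y) = y·e^{ky}. Then for all y ∈ [1, M²], the quantity T₄(y) := 4 h''(y)·y − (4 + 2/(1−η))·( y·(h'(y))² / h(y) ) + 6 h'(y) − η·h(y) satisfies T₄(y) ≥ (1/8) k h(y). -/

import Mathlib

private lemma hexpD (k y : ℝ) :
    HasDerivAt (fun y : ℝ => Real.exp (k * y)) (k * Real.exp (k * y)) y := by
  simpa [mul_comm, Function.comp_def] using
    (Real.hasDerivAt_exp (k * y)).comp y ((hasDerivAt_id y).const_mul k)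

private lemma deriv_h (k : ℝ) :
    deriv (fun y : ℝ => y * Real.exp (k * y)) =
      fun y : ℝ => (1 + k * y) * Real.exp (k * y) := by
  funext y
  have h1 : HasDerivAt (fun y : ℝ => y * Real.exp (k * y))
      ((1 + k * y) * Real.exp (k * y)) y := by
    have := (hasDerivAt_id y).fun_mul (hexpD k y)
    refine this.congr_deriv ?_
    simp [id_eq]
    ring
  exact h1.deriv

private lemma deriv_h' (k y : ℝ) :
    deriv (fun y : ℝ => (1 + k * y) * Real.exp (k * y)) y =
      (2 * k + k ^ 2 * y) * Real.exp (k * y) := by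
  have h1 : HasDerivAt (fun y : ℝ => 1 + k * y) k y := by
    simpa using ((hasDerivAt_id y).const_mul k).const_add 1
  have h2 := h1.fun_mul (hexpD k y)
  have h3 : HasDerivAt (fun y : ℝ => (1 + k * y) * Real.exp (k * y))
      ((2 * k + k ^ 2 * y) * Real.exp (k * y)) y := by
    refine h2.congr_deriv ?_
    ring
  exact h3.deriv

/-- For `M ≥ 1`, `k = 1/(24M²)`, `η = k/2`, `h(y) = y·e^{ky}`, the quantity
`T₄(y) = 4h''(y)·y - (4 + 2/(1-η))·(y·h'(y)²/h(y)) + 6h'(y) - η·h(y)` satisfies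
`T₄(y) ≥ (1/8)·k·h(y)` on `[1, M²]`. -/
theorem T4_lower_bound (M : ℝ) (hM : 1 ≤ M) :
    ∀ y ∈ Set.Icc (1 : ℝ) (M ^ 2),
      (let k : ℝ := 1 / (24 * M ^ 2);
       let η : ℝ := k / 2;
       let h : ℝ → ℝ := fun y => y * Real.exp (k * y);
       4 * deriv (deriv h) y * y
         - (4 + 2 / (1 - η)) * (y * (deriv h y) ^ 2 / h y)
         + 6 * deriv h y - η * h y) ≥
      (1 / 8) * (1 / (24 * M ^ 2)) * (y * Real.exp ((1 / (24 * M ^ 2)) * y)) := by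
  intro y hy
  obtain ⟨hy1, hy2⟩ := hy
  have hM0 : (0:ℝ) < M := lt_of_lt_of_le one_pos hM
  have hM2 : (0:ℝ) < M ^ 2 := by positivity
  set k : ℝ := 1 / (24 * M ^ 2) with hkdef
  have hk0 : 0 < k := by positivity
  have hkM : k * M ^ 2 = 1 / 24 := by
    field_simp [hkdef]
    rw [hkdef]; field_simp
  have hy0 : 0 < y := lt_of_lt_of_le one_pos hy1
  have hky : k * y ≤ 1 / 24 := by
    calc k * y ≤ k * M ^ 2 := by nlinarith
    _ = 1 / 24 := hkM
  have hkle : k ≤ k * y := by nlinarith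
  have hk24 : k ≤ 1 / 24 := le_trans hkle hky
  simp only [deriv_h k, deriv_h' k]
  have hE : 0 < Real.exp (k * y) := Real.exp_pos _
  set E : ℝ := Real.exp (k * y) with hEdef
  have hη : (0:ℝ) < 1 - k / 2 := by nlinarith
  have hdiv : y * ((1 + k * y) * E) ^ 2 / (y * E) = (1 + k * y) ^ 2 * E := by
    field_simp
  rw [hdiv]
  set a : ℝ := 2 / (1 - k / 2) with hadef
  have ha : a * (1 - k / 2) = 2 := div_mul_cancel₀ 2 (ne_of_gt hη)
  have ha0 : 0 < a := by positivity
  have key : 4 * ((2 * k + k ^ 2 * y) * E) * y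
      - (4 + a) * ((1 + k * y) ^ 2 * E)
      + 6 * ((1 + k * y) * E) - k / 2 * (y * E)
      - 1 / 8 * k * (y * E)
      = E * (2 + 43 / 8 * (k * y) - a * (1 + k * y) ^ 2) := by ring
  have poly : 2 + 43 / 8 * (k * y) - a * (1 + k * y) ^ 2 ≥ 0 := by
    nlinarith [mul_pos hk0 hy0, sq_nonneg (k * y), mul_le_mul_of_nonneg_left hky (le_of_lt (mul_pos hk0 hy0))]
  nlinarith [mul_nonneg (le_of_lt hE) poly]
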